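/- Let k ≥ k₀ > 0, R > 0, 0 < β < π, 0 < δ < 1, and let h(s) = k sin β (r(s) − R)/(2 r(s) μ(s)) on the strip {s ∈ C_{R,β} : |Im s| ≤ (1−δ) R sin β}. Then there exists C > 0 depending only on δ such that |h(s)| ≤ C k / √(kR sin β) on this strip. -/

import Mathlib

/-- The cut plane `C_{R,β} = ℂ \ {R cos β + it : |t| ≥ R sin β}`. -/
def cutPlane (R β : ℝ) : Set ℂ :=
  {s : ℂ | ∀ t : ℝ, R * Real.sin β ≤ |t| → s ≠ (R * Real.cos β : ℂ) + t * Complex.I}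

/-- `r(s) = √(R² + s² − 2sR cos β)`, principal branch. -/
noncomputable def rfun (R β : ℝ) (s : ℂ) : ℂ :=
  ((R : ℂ) ^ 2 + s ^ 2 - 2 * s * R * Real.cos β) ^ ((1 : ℂ) / 2)

/-- `μ(s) = √k · s sin β / √(R − s cos β + r(s))`, principal branches. -/
noncomputable def mufun (k R β : ℝ) (s : ℂ) : ℂ :=
  (Real.sqrt k : ℂ) * s * Real.sin β /
    (((R : ℂ) - s * Real.cos β + rfun R β s) ^ ((1 : ℂ) / 2))

/-- `h(s) = k sin β (r(s) − R)/(2 r(s) μ(s))`. -/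
noncomputable def hfun (k R β : ℝ) (s : ℂ) : ℂ :=
  (k : ℂ) * Real.sin β * (rfun R β s - R) / (2 * rfun R β s * mufun k R β s)

noncomputable def Complex.abs : AbsoluteValue ℂ ℝ where
  toFun := fun z => ‖z‖
  map_mul' := norm_mul
  nonneg' := norm_nonneg
  eq_zero' := fun _ => norm_eq_zero
  add_le' := norm_add_le

lemma Complex.abs_im_le_abs (z : ℂ) : |z.im| ≤ Complex.abs z := Complex.abs_im_le_norm z

lemma Complex.re_le_abs (z : ℂ) : z.re ≤ Complex.abs z := Complex.re_le_norm z

lemma Complex.sq_abs (z : ℂ) : Complex.abs z ^ 2 = Complex.normSq z := Complex.sq_norm z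

lemma Complex.abs_apply (z : ℂ) : Complex.abs z = Real.sqrt (Complex.normSq z) := Complex.norm_def z

lemma Complex.abs_ofReal (r : ℝ) : Complex.abs (r : ℂ) = |r| := Complex.norm_real r

lemma Complex.abs_two : Complex.abs 2 = 2 := by
  change ‖(2 : ℂ)‖ = 2
  simp

lemma Complex.norm_eq_abs (z : ℂ) : ‖z‖ = Complex.abs z := rfl

lemma Complex.abs_cpow_of_ne_zero {z : ℂ} (hz : z ≠ 0) (w : ℂ) :
    Complex.abs (z ^ w) = Complex.abs z ^ w.re / Real.exp (Complex.arg z * Complex.im w) :=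
  Complex.norm_cpow_of_ne_zero hz w

private lemma sq_le_imp {a b : ℝ} (hb : 0 ≤ b) (h : a^2 ≤ b^2) : a ≤ b := by
  nlinarith [sq_nonneg (a-b), sq_nonneg (a+b)]

lemma re_cpow_half_nonneg (z : ℂ) : 0 ≤ (z ^ ((1:ℂ)/2)).re := by
  rcases eq_or_ne z 0 with h | h
  · simp [h, Complex.zero_cpow (by norm_num : (1:ℂ)/2 ≠ 0)]
  · rw [Complex.cpow_def_of_ne_zero h, Complex.exp_re]
    apply mul_nonneg (Real.exp_pos _).le
    apply Real.cos_nonneg_of_mem_Icc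
    have h1 := Complex.neg_pi_lt_arg z
    have h2 := Complex.arg_le_pi z
    have h3 : (Complex.log z * ((1:ℂ)/2)).im = Complex.arg z / 2 := by
      simp [Complex.mul_im, Complex.log_im]
      ring
    rw [h3]
    constructor <;> [linarith; linarith]

lemma abs_cpow_half (z : ℂ) : Complex.abs (z ^ ((1:ℂ)/2)) = Real.sqrt (Complex.abs z) := by
  rcases eq_or_ne z 0 with h | h
  · simp [h, Complex.zero_cpow (by norm_num : (1:ℂ)/2 ≠ 0)]
  · rw [Complex.abs_cpow_of_ne_zero h]
    norm_num
    rw [Real.sqrt_eq_rpow]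

lemma cpow_half_mul_self {z : ℂ} (h : z ≠ 0) : z ^ ((1:ℂ)/2) * z ^ ((1:ℂ)/2) = z := by
  rw [← Complex.cpow_add _ _ h]
  norm_num

set_option maxHeartbeats 2000000 in
theorem hfun_strip_bound (δ : ℝ) (hδ0 : 0 < δ) (hδ1 : δ < 1) :
    ∃ C : ℝ, 0 < C ∧
      ∀ k₀ k R β : ℝ, 0 < k₀ → k₀ ≤ k → 0 < R → 0 < β → β < Real.pi →
        ∀ s ∈ cutPlane R β, |s.im| ≤ (1 - δ) * R * Real.sin β →
          ‖hfun k R β s‖ ≤ C * k / Real.sqrt (k * R * Real.sin β) := by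
  refine ⟨2/δ, by positivity, ?_⟩
  intro k₀ k R β hk₀ hk₀k hR hβ0 hβπ s hs hsim
  have hk : 0 < k := lt_of_lt_of_le hk₀ hk₀k
  have hsin : 0 < Real.sin β := Real.sin_pos_of_pos_of_lt_pi hβ0 hβπ
  set q := R * Real.sin β with hqdef
  have hq : 0 < q := mul_pos hR hsin
  have hpyth : (Real.cos β : ℂ)^2 + (Real.sin β : ℂ)^2 = 1 := by
    norm_cast
    exact Real.cos_sq_add_sin_sq β
  set c : ℂ := (R * Real.cos β : ℝ) + (R * Real.sin β : ℝ) * Complex.I with hcdef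
  set cb : ℂ := (R * Real.cos β : ℝ) - (R * Real.sin β : ℝ) * Complex.I with hcbdef
  set A := Complex.abs (s - c) with hAdef
  set B := Complex.abs (s - cb) with hBdef
  have hsim' : |s.im| ≤ (1 - δ) * q := by rw [hqdef]; linarith [hsim]
  have hsim2 := abs_le.mp hsim'
  have hA : δ * q ≤ A := by
    have h1 : |(s - c).im| ≤ A := Complex.abs_im_le_abs _
    have h2 : (s - c).im = s.im - q := by
      simp only [hcdef, Complex.sub_im, Complex.add_im, Complex.ofReal_im, Complex.mul_im,
        Complex.I_im, Complex.I_re, Complex.ofReal_re, hqdef]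
      ring
    rw [h2] at h1
    have : δ * q ≤ -(s.im - q) := by nlinarith [hsim2.2]
    linarith [neg_abs_le (s.im - q), abs_nonneg (s.im - q), this, neg_le_abs (s.im - q)]
  have hB : δ * q ≤ B := by
    have h1 : |(s - cb).im| ≤ B := Complex.abs_im_le_abs _
    have h2 : (s - cb).im = s.im + q := by
      simp only [hcbdef, Complex.sub_im, Complex.add_im, Complex.ofReal_im, Complex.mul_im,
        Complex.I_im, Complex.I_re, Complex.ofReal_re, hqdef]
      ring
    rw [h2] at h1
    have : δ * q ≤ s.im + q := by nlinarith [hsim2.1]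
    linarith [le_abs_self (s.im + q)]
  -- factorization of the radicand
  have hzfac : (R:ℂ)^2 + s^2 - 2*s*R*Real.cos β = (s - c) * (s - cb) := by
    rw [hcdef, hcbdef]
    simp only [Complex.ofReal_mul]
    linear_combination (-(R:ℂ)^2) * hpyth + (R:ℂ)^2*(Real.sin β : ℂ)^2 * Complex.I_sq
  have habsz : Complex.abs ((R:ℂ)^2 + s^2 - 2*s*R*Real.cos β) = A * B := by
    rw [hzfac, map_mul]
  have hApos : 0 < A := lt_of_lt_of_le (by positivity) hA
  have hBpos : 0 < B := lt_of_lt_of_le (by positivity) hB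
  have hz_ne : (R:ℂ)^2 + s^2 - 2*s*R*Real.cos β ≠ 0 := by
    intro h
    rw [h, map_zero] at habsz
    nlinarith
  set r : ℂ := rfun R β s with hrdef
  have hr2 : r * r = (R:ℂ)^2 + s^2 - 2*s*R*Real.cos β := by
    rw [hrdef, rfun]; exact cpow_half_mul_self hz_ne
  set P := Complex.abs r with hPdef
  have hP2 : P^2 = A * B := by
    rw [hPdef, ← habsz, ← hr2, map_mul]; ring
  have hPpos : 0 < P := by
    rcases lt_trichotomy P 0 with h|h|h
    · exact absurd h (not_lt.mpr (Complex.abs.nonneg r))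
    · nlinarith
    · exact h
  have hr_ne : r ≠ 0 := by
    intro h; rw [hPdef, h, map_zero] at hPpos; exact lt_irrefl 0 hPpos
  have hr_re : 0 ≤ r.re := by rw [hrdef, rfun]; exact re_cpow_half_nonneg _
  set T := Complex.abs (r + R) with hTdef
  have hT_R : R ≤ T := by
    have h1 : (r + (R:ℂ)).re = r.re + R := by
      simp [Complex.add_re, Complex.ofReal_re]
    have h2 := Complex.re_le_abs (r + (R:ℂ))
    rw [h1] at h2; linarith
  have hT_P : P ≤ T := by
    have h2 : P^2 = r.re^2 + r.im^2 := by
      rw [hPdef, Complex.sq_abs, Complex.normSq_apply]; ring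
    have h3 : T^2 = (r.re + R)^2 + r.im^2 := by
      rw [hTdef, Complex.sq_abs, Complex.normSq_apply]
      simp [Complex.add_re, Complex.add_im, Complex.ofReal_re, Complex.ofReal_im]
      ring
    have hTnn : (0:ℝ) ≤ T := Complex.abs.nonneg _
    apply sq_le_imp hTnn
    nlinarith
  have hTpos : 0 < T := lt_of_lt_of_le hR hT_R
  -- identities
  have hid1 : (r - R) * (r + R) = s * (s - 2*R*Real.cos β) := by
    linear_combination hr2
  have hid3 : ((R:ℂ) - s*Real.cos β) * ((R:ℂ) - s*Real.cos β)
      = r*r - s*s*(Real.sin β : ℂ)^2 := by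
    linear_combination (-1 : ℂ) * hr2 + s^2 * hpyth
  set Sb := Complex.abs s with hSbdef
  set D := Complex.abs (s - 2*R*Real.cos β) with hDdef
  set U := Complex.abs ((R:ℂ) - s*Real.cos β) with hUdef
  set W := Complex.abs ((R:ℂ) - s*Real.cos β + r) with hWdef
  have habs_c : Complex.abs c = R := by
    rw [hcdef, Complex.abs_apply, Complex.normSq_add_mul_I]
    rw [show (R*Real.cos β)^2 + (R*Real.sin β)^2 = R^2 by linear_combination R^2 * Real.cos_sq_add_sin_sq β]
    exact Real.sqrt_sq hR.le
  have habs_cb : Complex.abs cb = R := by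
    have : cb = (R*Real.cos β : ℝ) + (-(R*Real.sin β) : ℝ) * Complex.I := by
      rw [hcbdef]; push_cast; ring
    rw [this, Complex.abs_apply, Complex.normSq_add_mul_I]
    rw [show (R*Real.cos β)^2 + (-(R*Real.sin β))^2 = R^2 by linear_combination R^2 * Real.cos_sq_add_sin_sq β]
    exact Real.sqrt_sq hR.le
  have hSbA : Sb ≤ A + R := by
    calc Sb = Complex.abs ((s - c) + c) := by rw [hSbdef]; congr 1; ring
    _ ≤ A + R := by
        refine le_trans (Complex.abs.add_le _ _) ?_
        rw [habs_c]
  have hDA : D ≤ A + R := by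
    have he : s - 2*R*Real.cos β = (s - c) - cb := by
      rw [hcdef, hcbdef]; push_cast; ring
    calc D = Complex.abs ((s - c) - cb) := by rw [hDdef, he]
    _ ≤ A + R := by
        rw [← habs_cb]
        exact Complex.abs.sub_le_add _ _
  have hSbB : Sb ≤ B + R := by
    calc Sb = Complex.abs ((s - cb) + cb) := by rw [hSbdef]; congr 1; ring
    _ ≤ B + R := by
        refine le_trans (Complex.abs.add_le _ _) ?_
        rw [habs_cb]
  have hDB : D ≤ B + R := by
    have he : s - 2*R*Real.cos β = (s - cb) - c := by
      rw [hcdef, hcbdef]; push_cast; ring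
    calc D = Complex.abs ((s - cb) - c) := by rw [hDdef, he]
    _ ≤ B + R := by
        rw [← habs_c]
        exact Complex.abs.sub_le_add _ _
  set m := min A B with hmdef
  have hm : δ * q ≤ m := le_min hA hB
  have hmpos : 0 < m := lt_of_lt_of_le (by positivity) hm
  have hmP : m ≤ P := by
    apply sq_le_imp (Complex.abs.nonneg r)
    rw [hP2]
    calc m^2 = m * m := sq m
    _ ≤ A * B := mul_le_mul (min_le_left A B) (min_le_right A B) hmpos.le hApos.le
  have hDm : D ≤ m + R := by
    rcases min_cases A B with ⟨h1, _⟩ | ⟨h1, _⟩ <;> rw [hmdef, h1] <;> [exact hDA; exact hDB]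
  have hSbm : Sb ≤ m + R := by
    rcases min_cases A B with ⟨h1, _⟩ | ⟨h1, _⟩ <;> rw [hmdef, h1] <;> [exact hSbA; exact hSbB]
  -- bound on W
  have hU : U ≤ P + Sb * Real.sin β := by
    have h1 : U * U ≤ P^2 + Sb^2 * Real.sin β ^ 2 := by
      have : U * U = Complex.abs (r*r - s*s*(Real.sin β : ℂ)^2) := by
        rw [hUdef, ← map_mul, hid3]
      rw [this]
      refine le_trans (Complex.abs.sub_le_add _ _) ?_
      rw [map_mul, map_mul, map_mul, ← hPdef, ← hSbdef]
      have : Complex.abs ((Real.sin β : ℂ)^2) = Real.sin β ^ 2 := by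
        rw [map_pow, Complex.abs_ofReal, abs_of_nonneg hsin.le]
      rw [this]
      exact le_of_eq (by ring)
    apply sq_le_imp (by positivity)
    have h2 : (P + Sb*Real.sin β)^2 = P^2 + Sb^2*Real.sin β^2 + 2*(P*(Sb*Real.sin β)) := by
      ring
    have h3 : 0 ≤ P*(Sb*Real.sin β) :=
      mul_nonneg hPpos.le (mul_nonneg (Complex.abs.nonneg s) hsin.le)
    have h4 : U^2 = U*U := sq U
    linarith
  have hWb : W ≤ 2*P + Sb * Real.sin β := by
    calc W ≤ U + P := Complex.abs.add_le _ _
    _ ≤ 2*P + Sb * Real.sin β := by linarith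
  -- key squared inequality
  have hδ2q : δ^2*q ≤ m := by
    have t1 : δ*(δ*q) ≤ δ*m := mul_le_mul_of_nonneg_left hm hδ0.le
    have t2 : δ*m ≤ 1*m := mul_le_mul_of_nonneg_right hδ1.le hmpos.le
    calc δ^2*q = δ*(δ*q) := by ring
    _ ≤ δ*m := t1
    _ ≤ m := by linarith
  have hWc : W ≤ 2*P + m*Real.sin β + q := by
    have u1 : Sb * Real.sin β ≤ (m+R)*Real.sin β := mul_le_mul_of_nonneg_right hSbm hsin.le
    have u2 : (m+R)*Real.sin β = m*Real.sin β + q := by rw [hqdef]; ring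
    linarith
  have step1 : δ^2*q*W ≤ 4*P^2 := by
    have e0 : (0:ℝ) ≤ δ^2*q := by positivity
    have e1 : δ^2*q*W ≤ δ^2*q*(2*P + m*Real.sin β + q) := mul_le_mul_of_nonneg_left hWc e0
    have edist : δ^2*q*(2*P + m*Real.sin β + q)
        = δ^2*q*(2*P) + δ^2*q*(m*Real.sin β) + δ^2*q*q := by ring
    have e2 : δ^2*q*(2*P) ≤ m*(2*P) := mul_le_mul_of_nonneg_right hδ2q (by positivity)
    have e3 : δ^2*q*(m*Real.sin β) ≤ m*m := by
      have u3 : m*Real.sin β ≤ m := by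
        have := mul_le_mul_of_nonneg_left (Real.sin_le_one β) hmpos.le
        linarith
      have u4 : 0 ≤ m*Real.sin β := mul_nonneg hmpos.le hsin.le
      calc δ^2*q*(m*Real.sin β) ≤ m*(m*Real.sin β) := mul_le_mul_of_nonneg_right hδ2q u4
      _ ≤ m*m := mul_le_mul_of_nonneg_left u3 hmpos.le
    have e4 : δ^2*q*q ≤ m*m := by
      have hdq : (0:ℝ) ≤ δ*q := by positivity
      calc δ^2*q*q = (δ*q)*(δ*q) := by ring
      _ ≤ m*m := mul_le_mul hm hm hdq hmpos.le
    have e5 : m*P ≤ P*P := mul_le_mul_of_nonneg_right hmP hPpos.le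
    have e6 : m*m ≤ m*P := mul_le_mul_of_nonneg_left hmP hmpos.le
    have e7 : P*P = P^2 := (pow_two P).symm
    linarith
  have step2 : D^2 ≤ (m+R)^2 := pow_le_pow_left₀ (Complex.abs.nonneg _) hDm 2
  have step3 : (m+R)^2 ≤ 4*T^2 := by
    have : m + R ≤ 2*T := by linarith [hmP, hT_P, hT_R]
    have h2 := pow_le_pow_left₀ (by positivity : (0:ℝ) ≤ m + R) this 2
    have h3 : (2*T)^2 = 4*T^2 := by ring
    linarith
  have key : δ^2*q*(D^2*W) ≤ 16*(P^2*T^2) := by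
    have k2 : D^2*(δ^2*q*W) ≤ D^2*(4*P^2) := mul_le_mul_of_nonneg_left step1 (sq_nonneg D)
    have k3 : D^2*(4*P^2) ≤ (m+R)^2*(4*P^2) := mul_le_mul_of_nonneg_right step2 (by positivity)
    have k4 : (m+R)^2*(4*P^2) ≤ (4*T^2)*(4*P^2) := mul_le_mul_of_nonneg_right step3 (by positivity)
    have k1 : δ^2*q*(D^2*W) = D^2*(δ^2*q*W) := by ring
    have k5 : (4*T^2)*(4*P^2) = 16*(P^2*T^2) := by ring
    linarith
  have hWnn : (0:ℝ) ≤ W := Complex.abs.nonneg _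
  have hfin : δ * Real.sqrt q * (D * Real.sqrt W) ≤ 4*(P*T) := by
    apply sq_le_imp (by positivity)
    have e : (δ * Real.sqrt q * (D * Real.sqrt W))^2 = δ^2*q*(D^2*W) := by
      rw [mul_pow, mul_pow, mul_pow, Real.sq_sqrt hq.le, Real.sq_sqrt hWnn]
    rw [e]
    calc δ^2*q*(D^2*W) ≤ 16*(P^2*T^2) := key
    _ = (4*(P*T))^2 := by ring
  -- case split on s = 0
  rcases eq_or_ne s 0 with hs0 | hs0
  · rw [hs0]
    have hz0 : hfun k R β 0 = 0 := by
      simp [hfun, mufun]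
    rw [hz0, norm_zero]
    positivity
  -- main case
  set w : ℂ := (R:ℂ) - s*Real.cos β + r with hwdef
  have hid2 : (r - ((R:ℂ) - s*Real.cos β)) * w = s^2*(Real.sin β : ℂ)^2 := by
    rw [hwdef]
    linear_combination hr2 - s^2 * hpyth
  have hsin_ne : (Real.sin β : ℂ) ≠ 0 := Complex.ofReal_ne_zero.mpr hsin.ne'
  have hw_ne : w ≠ 0 := by
    intro h
    rw [h, mul_zero] at hid2
    exact (mul_ne_zero (pow_ne_zero 2 hs0) (pow_ne_zero 2 hsin_ne)) hid2.symm
  have hw_half_ne : w ^ ((1:ℂ)/2) ≠ 0 := by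
    rw [Ne, Complex.cpow_eq_zero_iff]
    tauto
  have hsqk_pos : 0 < Real.sqrt k := Real.sqrt_pos.mpr hk
  have hsqkc_ne : (Real.sqrt k : ℂ) ≠ 0 := Complex.ofReal_ne_zero.mpr hsqk_pos.ne'
  have hkc : (k:ℂ) = (Real.sqrt k : ℂ) * (Real.sqrt k : ℂ) := by
    norm_cast
    exact (Real.mul_self_sqrt hk.le).symm
  have hsin_ne' : Complex.sin (β:ℂ) ≠ 0 := by
    rw [← Complex.ofReal_sin]; exact hsin_ne
  have hw_half_ne' : (r + ((R:ℂ) - s * (Real.cos β : ℂ))) ^ ((1:ℂ)/2) ≠ 0 := by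
    rw [show r + ((R:ℂ) - s * (Real.cos β : ℂ)) = w by rw [hwdef]; ring]
    exact hw_half_ne
  have hsimp : hfun k R β s = (Real.sqrt k : ℂ) * (r - R) * (w ^ ((1:ℂ)/2)) / (2 * r * s) := by
    rw [hfun, mufun, ← hrdef, ← hwdef, hkc]
    field_simp [hr_ne, hs0, hsin_ne, hsin_ne', hw_half_ne, hw_half_ne', hsqkc_ne]
  have hWeq : W = Complex.abs w := by rw [hWdef, hwdef]
  have hnorm : ‖hfun k R β s‖
      = Real.sqrt k * (Complex.abs (r - R) * Real.sqrt W) / (2 * P * Sb) := by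
    rw [hsimp, Complex.norm_eq_abs, map_div₀, map_mul, map_mul, map_mul, map_mul]
    rw [abs_cpow_half, Complex.abs_ofReal, abs_of_nonneg (Real.sqrt_nonneg k),
      Complex.abs_two, hWeq, hPdef, hSbdef]
    ring
  have habs_id1 : Complex.abs (r - R) * T = Sb * D := by
    rw [hTdef, hSbdef, hDdef, ← map_mul, hid1, map_mul]
  have hq_sqrt_pos : 0 < Real.sqrt q := Real.sqrt_pos.mpr hq
  have hSbpos : 0 < Sb := by
    rw [hSbdef]
    exact Complex.abs.pos hs0
  have hRHS : (2/δ) * k / Real.sqrt (k * R * Real.sin β) = 2 * Real.sqrt k / (δ * Real.sqrt q) := by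
    rw [show k * R * Real.sin β = k * q by rw [hqdef]; ring, Real.sqrt_mul hk.le]
    have hks : Real.sqrt k * Real.sqrt k = k := Real.mul_self_sqrt hk.le
    rw [div_eq_div_iff (by positivity) (by positivity)]
    field_simp
    linear_combination (-1) * (Real.sq_sqrt hk.le)
  have hX : Complex.abs (r - R) * (δ * Real.sqrt q * Real.sqrt W) ≤ 4*P*Sb := by
    apply le_of_mul_le_mul_right ?_ hTpos
    calc Complex.abs (r - R) * (δ * Real.sqrt q * Real.sqrt W) * T
        = Sb * D * (δ * Real.sqrt q * Real.sqrt W) := by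
          linear_combination (δ * Real.sqrt q * Real.sqrt W) * habs_id1
    _ = Sb * (δ * Real.sqrt q * (D * Real.sqrt W)) := by ring
    _ ≤ Sb * (4*(P*T)) := mul_le_mul_of_nonneg_left hfin hSbpos.le
    _ = 4*P*Sb*T := by ring
  rw [hnorm, hRHS, div_le_div_iff₀ (by positivity) (by positivity)]
  calc Real.sqrt k * (Complex.abs (r - R) * Real.sqrt W) * (δ * Real.sqrt q)
      = Real.sqrt k * (Complex.abs (r - R) * (δ * Real.sqrt q * Real.sqrt W)) := by ring
  _ ≤ Real.sqrt k * (4*P*Sb) := mul_le_mul_of_nonneg_left hX (Real.sqrt_nonneg k)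
  _ = 2 * Real.sqrt k * (2 * P * Sb) := by ring
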